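/- arXiv:1201.2589 — 2 statements merged into one kernel-verified Lean document; each statement's English description precedes it below -/
import Mathlib

section
/- Let E be a Banach space and T : E → E a compact linear operator. Then every nonzero element of the spectrum of T is an eigenvalue of T. -/
open Metric Filter

/-- Every nonzero element of the spectrum of a compact operator on a complex
Banach space is an eigenvalue. -/
theorem compact_operator_spectrum_eq_eigenvalues
    {E : Type*} [NormedAddCommGroup E] [NormedSpace ℂ E] [CompleteSpace E]
    (T : E →L[ℂ] E) (hT : IsCompactOperator T) :
    ∀ z ∈ spectrum ℂ T, z ≠ 0 → ∃ x : E, x ≠ 0 ∧ T x = z • x := by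
  intro z hz hz0
  by_contra hcon
  push_neg at hcon
  -- `S = z - T`; it has trivial kernel by assumption.
  set S : E →L[ℂ] E := z • ContinuousLinearMap.id ℂ E - T with hSdef
  have hS_apply : ∀ x, S x = z • x - T x := fun x => rfl
  have hT_apply : ∀ x, T x = z • x - S x := by intro x; rw [hS_apply]; abel
  have hker : ∀ x : E, S x = 0 → x = 0 := by
    intro x hx
    by_contra hx0
    exact hcon x hx0 (by rw [hS_apply] at hx; linear_combination (norm := module) -hx)
  -- compactness: a compact set containing the image of the closed unit ball
  obtain ⟨K, hKc, hK⟩ :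
      ∃ K : Set E, IsCompact K ∧ ⇑T '' closedBall 0 1 ⊆ K :=
    hT.image_closedBall_subset_compact 1
  -- Step 1 : S is bounded below
  have hbb : ∃ c : ℝ, 0 < c ∧ ∀ x, c * ‖x‖ ≤ ‖S x‖ := by
    by_contra h
    push_neg at h
    have key : ∀ n : ℕ, ∃ v : E, ‖v‖ = 1 ∧ ‖S v‖ < 1 / (n + 1) := by
      intro n
      obtain ⟨x, hx⟩ := h (1 / (n + 1)) (by positivity)
      have hx0 : x ≠ 0 := by rintro rfl; simp at hx
      have hxn : (0:ℝ) < ‖x‖ := norm_pos_iff.mpr hx0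
      refine ⟨‖x‖⁻¹ • x, ?_, ?_⟩
      · simp [norm_smul, abs_of_pos (inv_pos.mpr hxn), inv_mul_cancel₀ hxn.ne']
      · rw [S.map_smul_of_tower, norm_smul]
        simp only [norm_inv, norm_norm]
        rw [inv_mul_lt_iff₀ hxn, mul_comm]
        exact hx
    choose v hv1 hv2 using key
    have hvb : ∀ n, T (v n) ∈ K := fun n =>
      hK ⟨v n, by simp [hv1 n], rfl⟩
    obtain ⟨a, -, φ, hφ, hconv⟩ := hKc.tendsto_subseq hvb
    have hS0 : Tendsto (fun n => S (v n)) atTop (nhds 0) := by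
      rw [tendsto_zero_iff_norm_tendsto_zero]
      exact squeeze_zero (fun n => norm_nonneg _) (fun n => (hv2 n).le)
        tendsto_one_div_add_atTop_nhds_zero_nat
    have hS0φ : Tendsto (fun n => S (v (φ n))) atTop (nhds 0) :=
      hS0.comp hφ.tendsto_atTop
    have hvφ : Tendsto (fun n => v (φ n)) atTop (nhds (z⁻¹ • a)) := by
      have : Tendsto (fun n => z⁻¹ • (T (v (φ n)) + S (v (φ n)))) atTop
          (nhds (z⁻¹ • (a + 0))) := ((hconv.add hS0φ).const_smul z⁻¹)
      simpa only [add_zero, funext fun n => show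
        z⁻¹ • (T (v (φ n)) + S (v (φ n))) = v (φ n) by
          rw [hT_apply]
          rw [show z • v (φ n) - S (v (φ n)) + S (v (φ n)) = z • v (φ n) by abel,
            smul_smul, inv_mul_cancel₀ hz0, one_smul]] using this
    set y := z⁻¹ • a with hy
    have hy1 : ‖y‖ = 1 := by
      have h1 := (continuous_norm.tendsto y).comp hvφ
      have h2 : Tendsto (fun _ : ℕ => (1:ℝ)) atTop (nhds ‖y‖) := by
        simpa [Function.comp_def, hv1] using h1
      exact tendsto_nhds_unique h2 tendsto_const_nhds
    have hSy : S y = 0 :=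
      tendsto_nhds_unique ((S.continuous.tendsto y).comp hvφ) hS0φ
    have : y = 0 := hker y hSy
    rw [this, norm_zero] at hy1
    exact one_ne_zero hy1.symm
  obtain ⟨c, hc, hSb⟩ := hbb
  -- S and its powers are injective with closed range
  have hSinj : Function.Injective ⇑S := by
    intro x y hxy
    exact sub_eq_zero.mp (hker (x - y) (by rw [map_sub, hxy, sub_self]))
  have hpow_apply : ∀ (n : ℕ) (x : E), (S ^ (n + 1)) x = (S ^ n) (S x) := by
    intro n x; rw [pow_succ]; rfl
  have hpow_apply' : ∀ (n : ℕ) (x : E), (S ^ (n + 1)) x = S ((S ^ n) x) := by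
    intro n x; rw [pow_succ']; rfl
  have hpowb : ∀ (n : ℕ) (x : E), c ^ n * ‖x‖ ≤ ‖(S ^ n) x‖ := by
    intro n
    induction n with
    | zero => intro x; simp
    | succ n ih =>
      intro x
      rw [hpow_apply' n x, pow_succ]
      calc c ^ n * c * ‖x‖ = c * (c ^ n * ‖x‖) := by ring
        _ ≤ c * ‖(S ^ n) x‖ := mul_le_mul_of_nonneg_left (ih x) hc.le
        _ ≤ ‖S ((S ^ n) x)‖ := hSb _
  have hpinj : ∀ n : ℕ, Function.Injective ⇑(S ^ n) := by
    intro n x y hxy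
    have h0 : (S ^ n) (x - y) = 0 := by rw [map_sub, hxy, sub_self]
    have h1 := hpowb n (x - y)
    rw [h0, norm_zero] at h1
    have hcn : (0:ℝ) < c ^ n := pow_pos hc n
    have h2 : ‖x - y‖ ≤ 0 := by nlinarith [norm_nonneg (x - y)]
    exact sub_eq_zero.mp (norm_le_zero_iff.mp h2)
  set R : ℕ → Submodule ℂ E := fun n => LinearMap.range ((S ^ n : E →L[ℂ] E) : E →ₗ[ℂ] E) with hR
  have hRclosed : ∀ n, IsClosed (R n : Set E) := by
    intro n
    have ha : AntilipschitzWith ((c ^ n)⁻¹).toNNReal ⇑(S ^ n) := by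
      apply (S ^ n).antilipschitz_of_bound
      intro x
      rw [Real.coe_toNNReal _ (inv_nonneg.mpr (pow_pos hc n).le)]
      have hcn : (0:ℝ) < c ^ n := pow_pos hc n
      rw [le_inv_mul_iff₀ hcn]
      exact hpowb n x
    have := ha.isClosed_range (S ^ n).uniformContinuous
    rwa [hR, LinearMap.coe_range]
  have hRsucc : ∀ n, R (n + 1) ≤ R n := by
    rintro n _ ⟨x, rfl⟩
    exact ⟨S x, (hpow_apply n x).symm⟩
  have hRanti : Antitone R := antitone_nat_of_succ_le hRsucc
  -- Case 1: S surjective ⟹ z is not in spectrum, contradiction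
  by_cases hsurj : Function.Surjective ⇑S
  · have heq : (algebraMap ℂ (E →L[ℂ] E)) z - T = S := by
      ext x
      simp [hS_apply, Algebra.algebraMap_eq_smul_one, ContinuousLinearMap.smul_apply]
    set e : E ≃L[ℂ] E := ContinuousLinearEquiv.ofBijective S
      (LinearMap.ker_eq_bot.mpr hSinj) (LinearMap.range_eq_top.mpr hsurj) with he
    have hec : ∀ y, e y = S y := by
      intro y
      rw [he, ← ContinuousLinearEquiv.coe_coe, ContinuousLinearEquiv.coe_ofBijective]
    have hunit : IsUnit ((algebraMap ℂ (E →L[ℂ] E)) z - T) := by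
      rw [heq]
      refine ⟨⟨S, (e.symm : E →L[ℂ] E), ?_, ?_⟩, rfl⟩
      · ext x
        show S (e.symm x) = x
        rw [← hec, e.apply_symm_apply]
      · ext x
        show e.symm (S x) = x
        rw [← hec, e.symm_apply_apply]
    exact (spectrum.notMem_iff.mpr hunit) hz
  -- Case 2: S not surjective: build Riesz sequence and contradict compactness
  · rw [Function.Surjective] at hsurj
    push_neg at hsurj
    obtain ⟨w, hw⟩ := hsurj
    -- strictly decreasing chain of ranges
    have hstrict : ∀ n : ℕ, ∃ x : E, x ∈ R n ∧ x ∉ R (n + 1) := by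
      intro n
      refine ⟨(S ^ n) w, ⟨w, rfl⟩, ?_⟩
      rintro ⟨u, hu⟩
      rw [ContinuousLinearMap.coe_coe, hpow_apply n u] at hu
      exact hw u (hpinj n hu)
    -- Riesz sequence
    have hries : ∀ n : ℕ, ∃ u : E, u ∈ R n ∧ ‖u‖ = 1 ∧
        ∀ y ∈ R (n + 1), 1 / 2 ≤ ‖u - y‖ := by
      intro n
      obtain ⟨v, hv, hv'⟩ := hstrict n
      have hne : (R (n + 1) : Set E).Nonempty := ⟨0, (R (n + 1)).zero_mem⟩
      set d := infDist v (R (n + 1) : Set E) with hd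
      have hdpos : 0 < d := ((hRclosed (n + 1)).notMem_iff_infDist_pos hne).mp hv'
      obtain ⟨y₀, hy₀, hy₀d⟩ := (infDist_lt_iff hne).mp
        (show d < 2 * d by linarith)
      set x := v - y₀ with hx
      clear_value x
      have hxd : ∀ y ∈ R (n + 1), d ≤ ‖x - y‖ := by
        intro y hy
        have : x - y = v - (y₀ + y) := by rw [hx]; abel
        rw [this, ← dist_eq_norm]
        exact infDist_le_dist_of_mem ((R (n + 1)).add_mem hy₀ hy)
      have hxnorm : ‖x‖ < 2 * d := by rwa [hx, ← dist_eq_norm]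
      have hx0 : x ≠ 0 := by
        rintro h0
        have : v = y₀ := by rwa [hx, sub_eq_zero] at h0
        exact hv' (this ▸ hy₀)
      have hxn : (0:ℝ) < ‖x‖ := norm_pos_iff.mpr hx0
      refine ⟨‖x‖⁻¹ • x, ?_, ?_, ?_⟩
      · refine Submodule.smul_of_tower_mem _ _ ?_
        rw [hx]; exact (R n).sub_mem hv (hRsucc n hy₀)
      · simp [norm_smul, abs_of_pos (inv_pos.mpr hxn), inv_mul_cancel₀ hxn.ne']
      · intro y hy
        have hmem : ‖x‖ • y ∈ R (n + 1) := Submodule.smul_of_tower_mem _ _ hy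
        have h1 : ‖x‖⁻¹ • x - y = ‖x‖⁻¹ • (x - ‖x‖ • y) := by
          rw [smul_sub, smul_smul, inv_mul_cancel₀ hxn.ne', one_smul]
        rw [h1, norm_smul, norm_inv, norm_norm]
        have h2 : d ≤ ‖x - ‖x‖ • y‖ := hxd _ hmem
        have hinvpos : (0:ℝ) < ‖x‖⁻¹ := inv_pos.mpr hxn
        have hinv : ‖x‖⁻¹ * ‖x‖ = 1 := inv_mul_cancel₀ hxn.ne'
        have ha := mul_lt_mul_of_pos_left hxnorm hinvpos
        have hb := mul_le_mul_of_nonneg_left h2 hinvpos.le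
        nlinarith
    choose u hu1 hu2 hu3 using hries
    -- the images T (u n) lie in the compact K, so some subsequence is Cauchy
    have hub : ∀ n, T (u n) ∈ K := fun n => hK ⟨u n, by simp [hu2 n], rfl⟩
    obtain ⟨a, -, φ, hφ, hconv⟩ := hKc.tendsto_subseq hub
    have hcauchy : CauchySeq (fun n => T (u (φ n))) := hconv.cauchySeq
    have hzpos : (0:ℝ) < ‖z‖ / 2 := by
      have : (0:ℝ) < ‖z‖ := norm_pos_iff.mpr hz0
      linarith
    obtain ⟨N, hN⟩ := Metric.cauchySeq_iff.mp hcauchy (‖z‖ / 2) hzpos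
    -- but any two distinct terms are at distance ≥ ‖z‖/2
    have hfar : ∀ m n : ℕ, n + 1 ≤ m → ‖z‖ / 2 ≤ dist (T (u n)) (T (u m)) := by
      intro m n hmn
      set w' : E := z⁻¹ • (S (u n) + (z • u m - S (u m))) with hw'
      have hw'mem : w' ∈ R (n + 1) := by
        refine Submodule.smul_mem _ _ (Submodule.add_mem _ ?_ (Submodule.sub_mem _ ?_ ?_))
        · obtain ⟨b, hb⟩ := hu1 n
          exact ⟨b, by rw [ContinuousLinearMap.coe_coe, hpow_apply' n b, ← hb]; rfl⟩
        · exact hRanti hmn (Submodule.smul_mem _ _ (hu1 m))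
        · obtain ⟨b, hb⟩ := hu1 m
          exact hRanti (by omega : n + 1 ≤ m + 1) ⟨b, by rw [ContinuousLinearMap.coe_coe, hpow_apply' m b, ← hb]; rfl⟩
      have hTd : T (u n) - T (u m) = z • (u n - w') := by
        rw [hw', smul_sub, smul_smul, mul_inv_cancel₀ hz0, one_smul,
          hT_apply (u n), hT_apply (u m)]
        abel
      rw [dist_eq_norm, hTd, norm_smul]
      have := hu3 n w' hw'mem
      have hz1 : (0:ℝ) < ‖z‖ := norm_pos_iff.mpr hz0
      calc ‖z‖ / 2 = ‖z‖ * (1 / 2) := by ring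
        _ ≤ ‖z‖ * ‖u n - w'‖ := mul_le_mul_of_nonneg_left this hz1.le
    have h1 := hN N le_rfl (N + 1) (by omega)
    have h2 := hfar (φ (N + 1)) (φ N) (by
      have := hφ (by omega : N < N + 1); omega)
    exact absurd h1 (not_lt.mpr h2)
end

section
/- Let f : ℝ≥0 → ℝ≥0 be continuous, θ ∈ [0,1), and suppose f(t) ≤ C t^{-θ} + K ∫₀ᵗ f(s) ds for all t > 0, where C, K ≥ 0. Then there is a constant N (depending only on θ, K) such that f(t) ≤ N C t^{-θ} e^{2Kt} for all t > 0. -/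
open MeasureTheory intervalIntegral

/-- Singular Gronwall inequality: if `f` is continuous and nonnegative on
`(0,∞)` and satisfies `f t ≤ C t^{-θ} + K ∫₀ᵗ f` for all `t > 0`, where
`θ ∈ [0,1)` and `C, K ≥ 0`, then there is `N = N(θ, K) > 0` such that
`f t ≤ N C t^{-θ} e^{2Kt}` for all `t > 0`. -/
theorem singular_gronwall (θ K : ℝ) (hθ0 : 0 ≤ θ) (hθ1 : θ < 1) (hK : 0 ≤ K) :
    ∃ N : ℝ, 0 < N ∧ ∀ (C : ℝ) (f : ℝ → ℝ), 0 ≤ C →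
      ContinuousOn f (Set.Ioi 0) →
      (∀ t ∈ Set.Ioi (0:ℝ), 0 ≤ f t) →
      (∀ t > (0:ℝ), IntervalIntegrable f volume 0 t) →
      (∀ t > (0:ℝ), f t ≤ C * t ^ (-θ) + K * ∫ s in (0:ℝ)..t, f s) →
      ∀ t > (0:ℝ), f t ≤ N * C * t ^ (-θ) * Real.exp (2 * K * t) := by
  have h1θ : 0 < 1 - θ := by linarith
  refine ⟨1 + 1/(1-θ), by positivity, ?_⟩
  intro C f hC hfc hf0 hfi hle t ht
  set G : ℝ → ℝ := fun x => ∫ s in (0:ℝ)..x, f s with hGdef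
  set ψ : ℝ → ℝ := fun x => C/(1-θ) * x ^ (1-θ) - Real.exp (-K*x) * G x with hψdef
  -- derivative of ψ on Ioo 0 t
  have hψderiv : ∀ x ∈ Set.Ioo (0:ℝ) t, HasDerivAt ψ
      (C * x ^ (-θ) - (Real.exp (-K*x) * (-K) * G x + Real.exp (-K*x) * f x)) x := by
    intro x hx
    have hx0 : (0:ℝ) < x := hx.1
    have h1 : HasDerivAt (fun y : ℝ => C/(1-θ) * y ^ (1-θ)) (C * x ^ (-θ)) x := by
      have := (Real.hasDerivAt_rpow_const (p := 1-θ) (Or.inl hx0.ne')).const_mul (C/(1-θ))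
      refine this.congr_deriv ?_
      symm
      have : (1 - θ) - 1 = -θ := by ring
      rw [this]
      field_simp
    have hG : HasDerivAt G (f x) x := by
      refine integral_hasDerivAt_right (hfi x hx0)
        (hfc.stronglyMeasurableAtFilter isOpen_Ioi x hx0) ?_
      exact hfc.continuousAt (Ioi_mem_nhds hx0)
    have he : HasDerivAt (fun y : ℝ => Real.exp (-K*y)) (Real.exp (-K*x) * (-K)) x := by
      have h0 : HasDerivAt (fun y : ℝ => -K*y) (-K) x := by
        simpa using (hasDerivAt_id x).const_mul (-K)
      exact (Real.hasDerivAt_exp (-K*x)).comp x h0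
    exact h1.sub (he.mul hG)
  -- derivative nonneg
  have hψnn : ∀ x ∈ Set.Ioo (0:ℝ) t, 0 ≤
      C * x ^ (-θ) - (Real.exp (-K*x) * (-K) * G x + Real.exp (-K*x) * f x) := by
    intro x hx
    have hx0 : (0:ℝ) < x := hx.1
    have ha : f x - K * G x ≤ C * x ^ (-θ) := by
      have := hle x hx0
      simp only [hGdef] at *
      linarith
    have he1 : Real.exp (-K*x) ≤ 1 := by
      rw [Real.exp_le_one_iff]
      nlinarith
    have he0 : 0 < Real.exp (-K*x) := Real.exp_pos _
    have hCx : 0 ≤ C * x ^ (-θ) := by positivity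
    have hre : Real.exp (-K*x) * (-K) * G x + Real.exp (-K*x) * f x
        = Real.exp (-K*x) * (f x - K * G x) := by ring
    rw [hre]
    rcases le_or_gt 0 (f x - K * G x) with h | h
    · nlinarith
    · nlinarith
  -- continuity of ψ on Icc 0 t
  have hGc : ContinuousOn G (Set.Icc 0 t) := by
    have := continuousOn_primitive_interval' (hfi t ht) (a := 0)
      (by simp [Set.uIcc_of_le ht.le, ht.le])
    simpa [hGdef, Set.uIcc_of_le ht.le] using this
  have hψc : ContinuousOn ψ (Set.Icc 0 t) := by
    apply ContinuousOn.sub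
    · exact continuousOn_const.mul (fun x _ =>
        (Real.continuousAt_rpow_const x (1-θ) (Or.inr h1θ.le)).continuousWithinAt)
    · exact ((Real.continuous_exp.comp (continuous_const.mul continuous_id)).continuousOn).mul hGc
  -- monotone
  have hmono : MonotoneOn ψ (Set.Icc 0 t) := by
    apply monotoneOn_of_deriv_nonneg (convex_Icc 0 t) hψc
    · intro x hx
      rw [interior_Icc] at hx
      exact (hψderiv x hx).differentiableAt.differentiableWithinAt
    · intro x hx
      rw [interior_Icc] at hx
      rw [(hψderiv x hx).deriv]
      exact hψnn x hx
  have hψ0 : ψ 0 = 0 := by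
    simp [hψdef, hGdef, Real.zero_rpow h1θ.ne', intervalIntegral.integral_same]
  have hmt := hmono (Set.left_mem_Icc.mpr ht.le) (Set.right_mem_Icc.mpr ht.le) ht.le
  rw [hψ0] at hmt
  -- G t ≤ C/(1-θ) * t^(1-θ) * exp (K t)
  have hGb : G t ≤ C/(1-θ) * t ^ (1-θ) * Real.exp (K*t) := by
    have he0 : 0 < Real.exp (-K*t) := Real.exp_pos _
    have hψt : Real.exp (-K*t) * G t ≤ C/(1-θ) * t ^ (1-θ) := by
      simp only [hψdef] at hmt; linarith
    have := mul_le_mul_of_nonneg_right hψt (Real.exp_pos (K*t)).le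
    calc G t = Real.exp (-K*t) * G t * Real.exp (K*t) := by
          rw [mul_comm (Real.exp (-K*t)) (G t), mul_assoc, ← Real.exp_add]; simp
      _ ≤ C/(1-θ) * t ^ (1-θ) * Real.exp (K*t) := this
  -- final estimate
  have hrp : t ^ (1-θ) = t * t ^ (-θ) := by
    rw [show (1-θ) = 1 + (-θ) by ring, Real.rpow_add ht, Real.rpow_one]
  have hKt : K * t ≤ Real.exp (K*t) := by
    have := Real.add_one_le_exp (K*t)
    linarith
  have hexp1 : (1:ℝ) ≤ Real.exp (2*K*t) := Real.one_le_exp (by positivity)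
  have h2e : Real.exp (2*K*t) = Real.exp (K*t) * Real.exp (K*t) := by
    rw [← Real.exp_add]; ring_nf
  have htθ : 0 < t ^ (-θ) := Real.rpow_pos_of_pos ht _
  have step1 : f t ≤ C * t ^ (-θ) + K * G t := hle t ht
  have step2 : K * G t ≤ (1/(1-θ)) * C * t ^ (-θ) * Real.exp (2*K*t) :=
    calc K * G t ≤ K * (C/(1-θ) * t ^ (1-θ) * Real.exp (K*t)) :=
          mul_le_mul_of_nonneg_left hGb hK
     _ = (1/(1-θ)) * C * t ^ (-θ) * ((K*t) * Real.exp (K*t)) := by rw [hrp]; ring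
     _ ≤ (1/(1-θ)) * C * t ^ (-θ) * (Real.exp (K*t) * Real.exp (K*t)) := by
          apply mul_le_mul_of_nonneg_left _ (by positivity)
          exact mul_le_mul_of_nonneg_right hKt (Real.exp_pos _).le
     _ = (1/(1-θ)) * C * t ^ (-θ) * Real.exp (2*K*t) := by rw [h2e]
  have hbase : C * t ^ (-θ) ≤ C * t ^ (-θ) * Real.exp (2*K*t) := by
    nlinarith [mul_le_mul_of_nonneg_left hexp1 (mul_nonneg hC htθ.le)]
  calc f t ≤ C * t ^ (-θ) + K * G t := step1
    _ ≤ C * t ^ (-θ) * Real.exp (2*K*t) + (1/(1-θ)) * C * t ^ (-θ) * Real.exp (2*K*t) := by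
        linarith
    _ = (1 + 1/(1-θ)) * C * t ^ (-θ) * Real.exp (2*K*t) := by ring
end
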